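/- For all integers k ≥ 2 and l ≥ 0 with k − l ≠ 2 the following identity holds in F: Σ_{i=0}^{min(k,l)} (−1)^i · Λch(k−i)·S̄ch(l−i) = R·y^{k−3}·(x₁x₂x₃)^{−l}·a(l,l,0)/Π. (By exactness of the Koszul complex K_{k−l}, the left side telescopes to the character of the image Im d_{k,l} of the Koszul differential d_{k,l} : Λ_k⊗S_l* → Λ_{k+1}⊗S_{l+1}*; the right side is its closed form, formula (ctdt7) of the paper.) -/

import Mathlib

noncomputable section

/-- The field of rational functions over ℚ in four variables. -/
abbrev F : Type := FractionRing (MvPolynomial (Fin 4) ℚ)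

def x1 : F := algebraMap (MvPolynomial (Fin 4) ℚ) F (MvPolynomial.X 0)
def x2 : F := algebraMap (MvPolynomial (Fin 4) ℚ) F (MvPolynomial.X 1)
def x3 : F := algebraMap (MvPolynomial (Fin 4) ℚ) F (MvPolynomial.X 2)
def y  : F := algebraMap (MvPolynomial (Fin 4) ℚ) F (MvPolynomial.X 3)

/-- `R = (x₁+y)(x₂+y)(x₃+y)`. -/
def R : F := (x1 + y) * (x2 + y) * (x3 + y)

/-- `Π = (x₁−x₂)(x₂−x₃)(x₁−x₃)`. -/
def P : F := (x1 - x2) * (x2 - x3) * (x1 - x3)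

/-- `a(t,u,v)` : determinant of the 3×3 matrix with `i`-th row `(xᵢ^{t+2}, xᵢ^{u+1}, xᵢ^v)`. -/
def a (t u v : ℤ) : F :=
  Matrix.det !![x1 ^ (t+2), x1 ^ (u+1), x1 ^ v;
                x2 ^ (t+2), x2 ^ (u+1), x2 ^ v;
                x3 ^ (t+2), x3 ^ (u+1), x3 ^ v]

/-- Complete homogeneous symmetric polynomial of degree `k` in three variables
(`0` for `k < 0`). -/
def hc (u v w : F) (k : ℤ) : F :=
  if k < 0 then 0
  else ∑ i ∈ Finset.range (k.toNat + 1), ∑ j ∈ Finset.range (k.toNat - i + 1),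
    u ^ i * v ^ j * w ^ (k.toNat - i - j)

def h (k : ℤ) : F := hc x1 x2 x3 k

def hbar (k : ℤ) : F := hc x1⁻¹ x2⁻¹ x3⁻¹ k

/-- Elementary symmetric polynomials in `x₁, x₂, x₃`. -/
def e : ℕ → F
  | 0 => 1
  | 1 => x1 + x2 + x3
  | 2 => x1*x2 + x1*x3 + x2*x3
  | 3 => x1*x2*x3
  | _ => 0

/-- Character of the `j`-th super exterior power `Λ_j`. -/
def lamCh (j : ℕ) : F := ∑ r ∈ Finset.range (min 3 j + 1), e r * y ^ (j - r)

/-- Character of the dual `S_j*` of the `j`-th super symmetric power. -/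
def sBarCh (j : ℕ) : F := hbar j + y⁻¹ * hbar ((j : ℤ) - 1)

/-- Schur polynomial: `s_μ · Π = det (xᵢ^{μⱼ+3−j})`. -/
def schur (m1 m2 m3 : ℤ) : F := a m1 m2 m3 / P


-- ===== auxiliary lemmas =====

lemma amap_ne {p : MvPolynomial (Fin 4) ℚ} (hp : p ≠ 0) :
    algebraMap (MvPolynomial (Fin 4) ℚ) F p ≠ 0 :=
  fun h => hp ((map_eq_zero_iff _ (IsFractionRing.injective _ _)).mp h)

lemma X_sub_ne {i j : Fin 4} (hij : i ≠ j) :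
    algebraMap (MvPolynomial (Fin 4) ℚ) F (MvPolynomial.X i) ≠
    algebraMap (MvPolynomial (Fin 4) ℚ) F (MvPolynomial.X j) := by
  intro h
  exact hij (MvPolynomial.X_injective (IsFractionRing.injective _ _ h))

lemma x1_ne : x1 ≠ 0 := amap_ne (MvPolynomial.X_ne_zero 0)
lemma x2_ne : x2 ≠ 0 := amap_ne (MvPolynomial.X_ne_zero 1)
lemma x3_ne : x3 ≠ 0 := amap_ne (MvPolynomial.X_ne_zero 2)
lemma y_ne : y ≠ 0 := amap_ne (MvPolynomial.X_ne_zero 3)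
lemma x12_ne : x1 - x2 ≠ 0 := sub_ne_zero.mpr (X_sub_ne (by decide))
lemma x23_ne : x2 - x3 ≠ 0 := sub_ne_zero.mpr (X_sub_ne (by decide))
lemma x13_ne : x1 - x3 ≠ 0 := sub_ne_zero.mpr (X_sub_ne (by decide))
lemma P_ne : P ≠ 0 := mul_ne_zero (mul_ne_zero x12_ne x23_ne) x13_ne
lemma E_ne : x1 * x2 * x3 ≠ 0 := mul_ne_zero (mul_ne_zero x1_ne x2_ne) x3_ne

lemma hc_mul (u v w : F) (n : ℕ) :
    hc u v w (n : ℤ) * ((v - w) * (u - v) * (u - w)) =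
    v * (u^(n+1) - v^(n+1)) * (u - w) - w * (u^(n+1) - w^(n+1)) * (u - v) := by
  rw [hc, if_neg (by omega), Int.toNat_natCast]
  have key : (∑ i ∈ Finset.range (n + 1), ∑ j ∈ Finset.range (n - i + 1),
        u ^ i * v ^ j * w ^ (n - i - j)) * (v - w)
      = (∑ i ∈ Finset.range (n + 1), u ^ i * v ^ ((n+1) - 1 - i)) * v
        - (∑ i ∈ Finset.range (n + 1), u ^ i * w ^ ((n+1) - 1 - i)) * w := by
    rw [Finset.sum_mul, Finset.sum_mul, Finset.sum_mul, ← Finset.sum_sub_distrib]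
    apply Finset.sum_congr rfl
    intro i hi
    have him : i ≤ n := by simp at hi; omega
    have inner : (∑ j ∈ Finset.range (n - i + 1), u ^ i * v ^ j * w ^ (n - i - j)) * (v - w)
        = u ^ i * (v ^ (n - i + 1) - w ^ (n - i + 1)) := by
      rw [← geom_sum₂_mul v w (n - i + 1), ← mul_assoc, Finset.mul_sum]
      congr 1
      apply Finset.sum_congr rfl
      intro j hj
      have : n - i + 1 - 1 - j = n - i - j := by omega
      rw [this]; ring
    rw [inner]
    have h1 : n - i + 1 = (n + 1 - 1 - i) + 1 := by omega
    rw [h1, pow_succ, pow_succ]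
    ring
  linear_combination ((u - v) * (u - w)) * key
    + (v * (u - w)) * geom_sum₂_mul u v (n + 1)
    - (w * (u - v)) * geom_sum₂_mul u w (n + 1)

lemma hbar_neg {k : ℤ} (hk : k < 0) : hbar k = 0 := by rw [hbar, hc, if_pos hk]

lemma hbar_zero : hbar 0 = 1 := by
  rw [hbar, hc, if_neg (by norm_num)]
  norm_num

lemma hc_smul (u v w c : F) (n : ℕ) :
    hc (c*u) (c*v) (c*w) (n:ℤ) = hc u v w (n:ℤ) * c^n := by
  rw [hc, hc, if_neg (by omega), if_neg (by omega), Int.toNat_natCast, Finset.sum_mul]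
  apply Finset.sum_congr rfl
  intro i hi
  rw [Finset.sum_mul]
  apply Finset.sum_congr rfl
  intro j hj
  have hi' : i ≤ n := by simp at hi; omega
  have hj' : j ≤ n - i := by simp at hj; omega
  have hn : n = i + j + (n - i - j) := by omega
  rw [mul_pow, mul_pow, mul_pow]
  calc c^i * u^i * (c^j * v^j) * (c^(n-i-j) * w^(n-i-j))
      = u^i * v^j * w^(n-i-j) * (c^i * c^j * c^(n-i-j)) := by ring
    _ = u^i * v^j * w^(n-i-j) * c^n := by rw [← pow_add, ← pow_add, ← hn]

lemma hbar_scale (n : ℕ) :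
    hc (x2*x3) (x1*x3) (x1*x2) (n:ℤ) = hbar (n:ℤ) * (x1*x2*x3)^n := by
  have c1 : (x1*x2*x3) * x1⁻¹ = x2*x3 := by field_simp [x1_ne]
  have c2 : (x1*x2*x3) * x2⁻¹ = x1*x3 := by field_simp [x2_ne]
  have c3 : (x1*x2*x3) * x3⁻¹ = x1*x2 := by field_simp [x3_ne]
  rw [hbar, ← hc_smul, c1, c2, c3]

lemma hbar_closed (n : ℕ) :
    hbar (n:ℤ) * P * (x1*x2*x3)^(n+1) =
    ((x2*x3)^(n+1)*(x2-x3) - (x1*x3)^(n+1)*(x1-x3) + (x1*x2)^(n+1)*(x1-x2)) * (x1*x2*x3) := by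
  have hm := hc_mul (x2*x3) (x1*x3) (x1*x2) n
  have hs := hbar_scale n
  rw [P] at *
  linear_combination (-(((x1-x2)*(x2-x3)*(x1-x3)) * (x1*x2*x3))) * hs - hm

lemma hbar_div (n : ℕ) :
    hbar (n:ℤ) = (((x2*x3)^(n+1)*(x2-x3) - (x1*x3)^(n+1)*(x1-x3)
      + (x1*x2)^(n+1)*(x1-x2)) * (x1*x2*x3)) / (P * (x1*x2*x3)^(n+1)) := by
  rw [eq_div_iff (mul_ne_zero P_ne (pow_ne_zero _ E_ne))]
  linear_combination hbar_closed n

lemma lamCh_big (m : ℕ) : lamCh (m+3) = y^m * R := by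
  rw [lamCh]
  have hmin : min 3 (m+3) = 3 := by omega
  rw [hmin, Finset.sum_range_succ, Finset.sum_range_succ, Finset.sum_range_succ,
    Finset.sum_range_one]
  have s1 : m+3-1 = m+2 := by omega
  have s2 : m+3-2 = m+1 := by omega
  have s3 : m+3-3 = m := by omega
  rw [s1, s2, s3]
  simp only [e, Nat.sub_zero, R]
  ring

lemma lamCh_two : lamCh 2 = y^2 + (x1+x2+x3)*y + (x1*x2+x1*x3+x2*x3) := by
  rw [lamCh]
  norm_num [Finset.sum_range_succ, Finset.sum_range_one, e]

lemma lamCh_one : lamCh 1 = y + (x1+x2+x3) := by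
  rw [lamCh]
  norm_num [Finset.sum_range_succ, Finset.sum_range_one, e]

lemma lamCh_zero : lamCh 0 = 1 := by
  rw [lamCh]
  norm_num [e]

lemma sBarCh_succ (l : ℕ) : sBarCh (l+1) = hbar ((l:ℤ)+1) + y⁻¹ * hbar (l:ℤ) := by
  rw [sBarCh]
  have c1 : ((l+1:ℕ):ℤ) - 1 = (l:ℤ) := by push_cast; ring
  have c2 : ((l+1:ℕ):ℤ) = (l:ℤ) + 1 := by push_cast; ring
  rw [c1, c2]

lemma hbar_m1 : hbar (-1) = 0 := hbar_neg (by norm_num)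

lemma sBarCh_zero : sBarCh 0 = 1 := by
  rw [sBarCh]
  norm_num [hbar_zero, hbar_m1]

set_option maxHeartbeats 4000000 in
lemma main_aux : ∀ l k : ℕ, 2 ≤ k → (k:ℤ) - l ≠ 2 →
    (∑ i ∈ Finset.range (min k l + 1), (-1 : F) ^ i * lamCh (k - i) * sBarCh (l - i))
    = R * y ^ ((k:ℤ) - 3) * hbar (l:ℤ) := by
  intro l
  induction l with
  | zero =>
    intro k hk hkl
    have hk3 : 3 ≤ k := by omega
    obtain ⟨m, rfl⟩ : ∃ m, k = m + 3 := ⟨k - 3, by omega⟩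
    rw [Nat.min_zero, Finset.sum_range_one]
    rw [show m+3-0 = m+3 from rfl, show 0-0 = 0 from rfl, lamCh_big, sBarCh_zero,
      Nat.cast_zero, hbar_zero]
    rw [show ((m+3:ℕ):ℤ) - 3 = ((m:ℕ):ℤ) by push_cast; ring, zpow_natCast]
    ring
  | succ l ih =>
    intro k hk hkl
    by_cases hk2 : k = 2
    · subst hk2
      rw [show ((2:ℕ):ℤ) - 3 = (-1:ℤ) by norm_num, zpow_neg_one]
      match l with
      | 0 =>
        rw [show min 2 1 = 1 from rfl, Finset.sum_range_succ, Finset.sum_range_one]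
        have h1 := hbar_closed 1
        have hy : y⁻¹ * y = 1 := inv_mul_cancel₀ y_ne
        norm_num [sBarCh, lamCh_two, lamCh_one, hbar_zero, hbar_m1] at h1 ⊢
        rw [R]
        rw [P] at h1
        refine mul_left_cancel₀ (mul_ne_zero y_ne (mul_ne_zero
          (mul_ne_zero (mul_ne_zero x12_ne x23_ne) x13_ne) (pow_ne_zero 2 E_ne))) ?_
        linear_combination (y*(y^2 + (x1+x2+x3)*y + (x1*x2+x1*x3+x2*x3)) - ((x1+y)*((x2+y)*(x3+y)))) * h1
          + (((x1-x2)*(x2-x3)*(x1-x3)) * (x1*x2*x3)^2 * ((y^2 + (x1+x2+x3)*y + (x1*x2+x1*x3+x2*x3)) - ((x1+y)*((x2+y)*(x3+y))) * hbar 1)) * hy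
      | 1 =>
        rw [show min 2 2 = 2 from rfl, Finset.sum_range_succ, Finset.sum_range_succ,
          Finset.sum_range_one]
        have h1 := hbar_closed 1
        have h2 := hbar_closed 2
        have hy : y⁻¹ * y = 1 := inv_mul_cancel₀ y_ne
        norm_num [sBarCh, lamCh_two, lamCh_one, lamCh_zero, hbar_zero, hbar_m1] at h1 h2 ⊢
        rw [R]
        rw [P] at h1 h2
        refine mul_left_cancel₀ (mul_ne_zero y_ne (mul_ne_zero
          (mul_ne_zero (mul_ne_zero x12_ne x23_ne) x13_ne) (pow_ne_zero 3 E_ne))) ?_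
        linear_combination (y*(y^2 + (x1+x2+x3)*y + (x1*x2+x1*x3+x2*x3)) - ((x1+y)*((x2+y)*(x3+y)))) * h2
          + (((y^2 + (x1+x2+x3)*y + (x1*x2+x1*x3+x2*x3)) - y*(y + (x1+x2+x3)))*(x1*x2*x3)) * h1
          + (((x1-x2)*(x2-x3)*(x1-x3)) * (x1*x2*x3)^3 * ((y^2 + (x1+x2+x3)*y + (x1*x2+x1*x3+x2*x3)) * hbar 1 - (y + (x1+x2+x3)) - ((x1+y)*((x2+y)*(x3+y))) * hbar 2)) * hy
      | (s+2) =>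
        rw [show min 2 (s+3) = 2 by omega, Finset.sum_range_succ, Finset.sum_range_succ,
          Finset.sum_range_one]
        rw [show s+3-0 = (s+2)+1 from rfl, show s+3-1 = (s+1)+1 by omega,
          show s+3-2 = s+1 by omega, show (2:ℕ)-0 = 2 from rfl, show (2:ℕ)-1 = 1 from rfl,
          show (2:ℕ)-2 = 0 from rfl, lamCh_two, lamCh_one, lamCh_zero]
        rw [show (s+2)+1 = (s+3) from rfl, show (s+1)+1 = s+2 from rfl]
        simp only [sBarCh]
        rw [show ((s+3:ℕ):ℤ) - 1 = ((s+2:ℕ):ℤ) by push_cast; ring,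
          show ((s+2:ℕ):ℤ) - 1 = ((s+1:ℕ):ℤ) by push_cast; ring,
          show ((s+1:ℕ):ℤ) - 1 = ((s:ℕ):ℤ) by push_cast; ring]
        have h0 := hbar_closed s
        have h1 := hbar_closed (s+1)
        have h2 := hbar_closed (s+2)
        have h3 := hbar_closed (s+3)
        have hy : y⁻¹ * y = 1 := inv_mul_cancel₀ y_ne
        rw [R]
        rw [P] at h0 h1 h2 h3
        refine mul_left_cancel₀ (mul_ne_zero y_ne (mul_ne_zero
          (mul_ne_zero (mul_ne_zero x12_ne x23_ne) x13_ne) (pow_ne_zero (s+4) E_ne))) ?_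
        linear_combination (y*(y^2 + (x1+x2+x3)*y + (x1*x2+x1*x3+x2*x3)) - ((x1+y)*((x2+y)*(x3+y)))) * h3
          + (((y^2 + (x1+x2+x3)*y + (x1*x2+x1*x3+x2*x3)) - y*(y + (x1+x2+x3)))*(x1*x2*x3)) * h2
          + ((y - (y + (x1+x2+x3)))*(x1*x2*x3)^2) * h1
          + ((x1*x2*x3)^3) * h0
          + (((x1-x2)*(x2-x3)*(x1-x3)) * (x1*x2*x3)^(s+4) * ((y^2 + (x1+x2+x3)*y + (x1*x2+x1*x3+x2*x3)) * hbar ((s+2:ℕ):ℤ) - (y + (x1+x2+x3)) * hbar ((s+1:ℕ):ℤ)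
              + hbar ((s:ℕ):ℤ) - ((x1+y)*((x2+y)*(x3+y))) * hbar ((s+3:ℕ):ℤ))) * hy
    · have hk3 : 3 ≤ k := by omega
      obtain ⟨m, rfl⟩ : ∃ m, k = m + 3 := ⟨k - 3, by omega⟩
      have hmin : min (m+3) (l+1) = min (m+2) l + 1 := by omega
      rw [hmin, Finset.sum_range_succ']
      have hterm : ∀ i, (-1:F)^(i+1) * lamCh (m+3-(i+1)) * sBarCh (l+1-(i+1))
          = -((-1:F)^i * lamCh ((m+2)-i) * sBarCh (l-i)) := by
        intro i
        have e1 : m+3-(i+1) = (m+2)-i := by omega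
        have e2 : l+1-(i+1) = l-i := by omega
        rw [e1, e2, pow_succ]; ring
      rw [Finset.sum_congr rfl (fun i _ => hterm i), Finset.sum_neg_distrib,
        ih (m+2) (by omega) (by push_cast at hkl ⊢; omega)]
      rw [show m+3-0 = m+3 from rfl, show l+1-0 = l+1 from rfl, lamCh_big, sBarCh_succ]
      rw [show ((m+2:ℕ):ℤ) - 3 = ((m:ℕ):ℤ) - 1 by push_cast; ring,
        show ((m+3:ℕ):ℤ) - 3 = ((m:ℕ):ℤ) by push_cast; ring,
        show ((l:ℕ):ℤ) + 1 = ((l+1:ℕ):ℤ) by push_cast; ring,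
        zpow_sub_one₀ y_ne, zpow_natCast]
      ring

set_option maxHeartbeats 1000000 in
/-- Telescoping character formula for `Im d_{k,l}` along the exact Koszul complex
`K_{k−l}` (`k ≥ 2`, `l ≥ 0`, `k−l ≠ 2`):
`Σ_{i=0}^{min(k,l)} (−1)^i Λch(k−i)·S̄ch(l−i) = R·y^{k−3}·(x₁x₂x₃)^{−l}·a(l,l,0)/Π`. -/
theorem stmt_10 (k l : ℕ) (hk : 2 ≤ k) (hkl : (k : ℤ) - l ≠ 2) :
    (∑ i ∈ Finset.range (min k l + 1), (-1 : F) ^ i * lamCh (k - i) * sBarCh (l - i))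
    = R * y ^ ((k : ℤ) - 3) * (x1*x2*x3) ^ (-(l : ℤ)) * a l l 0 / P := by
  have hE : ((x1*x2*x3):F) ^ (-(l:ℤ)) = ((x1*x2*x3)^l)⁻¹ := by
    rw [zpow_neg, zpow_natCast]
  have ha : a l l 0 * (x1*x2*x3) = hbar (l:ℤ) * P * (x1*x2*x3)^(l+1) := by
    rw [hbar_closed l, a]
    simp [Matrix.det_fin_three]
    left
    rw [show ((l:ℤ)+2) = ((l+2:ℕ):ℤ) by push_cast; ring,
      show ((l:ℤ)+1) = ((l+1:ℕ):ℤ) by push_cast; ring]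
    simp only [zpow_natCast]
    ring
  have ha' : a l l 0 = hbar (l:ℤ) * P * (x1*x2*x3)^l :=
    mul_right_cancel₀ E_ne (by rw [ha, pow_succ]; ring)
  rw [main_aux l k hk hkl, ha', hE]
  field_simp [P_ne, pow_ne_zero l E_ne]
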